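/- Let p ≥ 12 be an integer and n an integer with n ≥ 2p. Then (n-1)^p + (n-1)·3^p < 3(n-3)^p + (n-3)·3^p; equivalently, e_p(W_n) < e_p(K_{3,n-3}). -/
import Mathlib

open Real Finset

-- 1 + x ≤ exp (x - x^2/2 + x^3/3) for 0 ≤ x ≤ 1/10
lemma aux_one_add_le_exp {x : ℝ} (hx : 0 ≤ x) (hx1 : x ≤ 1/10) :
    1 + x ≤ Real.exp (x - x^2/2 + x^3/3) := by
  have hfac : x - x^2/2 + x^3/3 = x * (1 - x/2 + x^2/3) := by ring
  have hbr : (0:ℝ) ≤ 1 - x/2 + x^2/3 := by nlinarith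
  have htnn : 0 ≤ x - x^2/2 + x^3/3 := by
    rw [hfac]; exact mul_nonneg hx hbr
  have h := Real.sum_le_exp_of_nonneg htnn 4
  set t : ℝ := x - x^2/2 + x^3/3 with ht
  have hsum : ∑ i ∈ range 4, t ^ i / i.factorial
      = 1 + t + t^2/2 + t^3/6 := by
    rw [Finset.sum_range_succ, Finset.sum_range_succ, Finset.sum_range_succ,
      Finset.sum_range_succ, Finset.sum_range_zero]
    norm_num [Nat.factorial]
  rw [hsum] at h
  refine le_trans ?_ h
  have hkey : t + t^2/2 + t^3/6 - x
      = x^4 * (5/24 + x/8 - 19*x^2/144 + 7*x^3/72 - x^4/36 + x^5/162) := by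
    rw [ht]; ring
  have hx2 : x^2 ≤ 1/100 := by nlinarith
  have hx4 : x^4 ≤ 1/10000 := by nlinarith [pow_nonneg hx 2, sq_nonneg (x^2 - 1/100)]
  have hbr2 : (0:ℝ) ≤ 5/24 + x/8 - 19*x^2/144 + 7*x^3/72 - x^4/36 + x^5/162 := by
    have h3 : (0:ℝ) ≤ x^3 := pow_nonneg hx 3
    have h5 : (0:ℝ) ≤ x^5 := pow_nonneg hx 5
    linarith
  nlinarith [mul_nonneg (pow_nonneg hx 4) hbr2]

lemma aux_exp_val : Real.exp (23/21) < 2.995 := by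
  have h1 : Real.exp 1 < 2.7182818286 := Real.exp_one_lt_d9
  have h2 : Real.exp (2/21) ≤ 1.1 := by
    have h := Real.exp_bound' (x := (2:ℝ)/21) (by norm_num) (by norm_num)
      (n := 4) (by norm_num)
    have hsum : ∑ m ∈ range 4, ((2:ℝ)/21) ^ m / m.factorial
        = 1 + 2/21 + (2/21)^2/2 + (2/21)^3/6 := by
      rw [Finset.sum_range_succ, Finset.sum_range_succ, Finset.sum_range_succ,
        Finset.sum_range_succ, Finset.sum_range_zero]
      norm_num [Nat.factorial]
    rw [hsum] at h
    norm_num [Nat.factorial] at h ⊢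
    linarith
  have h3 : Real.exp (23/21) = Real.exp 1 * Real.exp (2/21) := by
    rw [← Real.exp_add]; norm_num
  rw [h3]
  calc Real.exp 1 * Real.exp (2/21) ≤ Real.exp 1 * 1.1 :=
        mul_le_mul_of_nonneg_left h2 (Real.exp_pos 1).le
    _ < 2.7182818286 * 1.1 := by nlinarith [Real.exp_pos 1]
    _ < 2.995 := by norm_num

theorem epW_lt_epK3 (p n : ℕ) (hp : 12 ≤ p) (hn : 2 * p ≤ n) :
    ((n : ℝ) - 1) ^ p + ((n : ℝ) - 1) * 3 ^ p <
      3 * ((n : ℝ) - 3) ^ p + ((n : ℝ) - 3) * 3 ^ p := by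
  set m : ℝ := (n : ℝ) - 3 with hm
  have hn24 : (24:ℝ) ≤ (n:ℝ) := by
    have : 24 ≤ n := le_trans (by omega) hn
    exact_mod_cast this
  have hm21 : (21:ℝ) ≤ m := by rw [hm]; linarith
  have hmpos : (0:ℝ) < m := by linarith
  have hpm : (p:ℝ) ≤ (m + 3)/2 := by
    have h : (2*p : ℝ) ≤ n := by exact_mod_cast hn
    rw [hm] at *
    push_cast at h ⊢
    linarith
  set x : ℝ := 2/m with hx
  have hx0 : 0 ≤ x := by positivity
  have hx1 : x ≤ 1/10 := by
    rw [hx, div_le_div_iff₀ hmpos (by norm_num)]; linarith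
  set t : ℝ := x - x^2/2 + x^3/3 with htdef
  have htnn : 0 ≤ t := by
    have hfac : t = x * (1 - x/2 + x^2/3) := by rw [htdef]; ring
    rw [hfac]
    exact mul_nonneg hx0 (by nlinarith)
  -- p * t ≤ 23/21
  have hpt : (p:ℝ) * t ≤ 23/21 := by
    have h1 : (p:ℝ) * t ≤ (m+3)/2 * t := mul_le_mul_of_nonneg_right hpm htnn
    have h2 : (m+3)/2 * t ≤ 23/21 := by
      have heq : (m+3)/2 * t = ((m+3)*(3*m^2 - 3*m + 4))/(3*m^3) := by
        rw [htdef, hx]; field_simp; ring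
      rw [heq, div_le_div_iff₀ (by positivity) (by norm_num : (0:ℝ) < 21)]
      nlinarith [mul_nonneg (by linarith : (0:ℝ) ≤ m - 21) (sq_nonneg m)]
    linarith
  -- key bound: (m+2)^p < 2.995 * m^p
  have hstep : (m + 2)^p < 2.995 * m^p := by
    have heq : m + 2 = m * (1 + x) := by
      rw [hx]; field_simp
    have h1x : 1 + x ≤ Real.exp t := by
      rw [htdef]; exact aux_one_add_le_exp hx0 hx1
    have hpow : (1 + x)^p ≤ (Real.exp t)^p :=
      pow_le_pow_left₀ (by linarith) h1x p
    have hexp : (Real.exp t)^p = Real.exp ((p:ℝ) * t) := (Real.exp_nat_mul t p).symm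
    have h2 : (1 + x)^p < 2.995 := by
      calc (1 + x)^p ≤ Real.exp ((p:ℝ) * t) := by rw [← hexp]; exact hpow
        _ ≤ Real.exp (23/21) := Real.exp_le_exp.mpr hpt
        _ < 2.995 := aux_exp_val
    calc (m + 2)^p = m^p * (1 + x)^p := by rw [heq, mul_pow]
      _ < m^p * 2.995 := by
          have hmp : (0:ℝ) < m^p := by positivity
          nlinarith
      _ = 2.995 * m^p := mul_comm _ _
  -- small term: 2 * 3^p ≤ 0.005 * m^p
  have hsmall : 2 * (3:ℝ)^p ≤ 0.005 * m^p := by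
    have h21 : (21:ℝ)^p ≤ m^p := pow_le_pow_left₀ (by norm_num) hm21 p
    have h712 : (7:ℝ)^12 ≤ 7^p := pow_le_pow_right₀ (by norm_num) hp
    have h3p : (0:ℝ) < (3:ℝ)^p := by positivity
    have h37 : (21:ℝ)^p = 3^p * 7^p := by rw [← mul_pow]; norm_num
    nlinarith [pow_pos (by norm_num : (0:ℝ) < 7) p]
  have hmain : (m + 2)^p + 2 * 3^p < 3 * m^p := by linarith
  have hn1 : (n:ℝ) - 1 = m + 2 := by rw [hm]; ring
  rw [hn1]
  have hexp2 : (m + 2) * 3 ^ p = m * 3 ^ p + 2 * 3 ^ p := by ring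
  linarith
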